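/- Fix a well order ≺ on N = ℕ^ℕ with the metric d(σ,τ) = 2^{-(min{n : σ_n≠τ_n}-1)}, and let σ ∈ N. Suppose every infinite ≺-interval of N is dense in the Baire space topology of N. Then for every σ ∈ N and every infinite ≺-interval I there exists a σ-good sequence inside I, i.e. a ≺-increasing sequence τ^1 ≺ τ^2 ≺ ⋯ of elements of I with d(σ, τ^n) ≤ 2^{-n-2} for all n ≥ 1. -/

import Mathlib

open Set

/-- The position of the first difference of two distinct sequences. -/
noncomputable def firstDiff (σ τ : ℕ → ℕ) : ℕ := sInf {n | σ n ≠ τ n}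

open scoped Classical in
/-- The metric `d(σ,τ) = 2^{-(min{n : σ n ≠ τ n} - 1)}` on the Baire space `ℕ^ℕ`. -/
noncomputable def dN (σ τ : ℕ → ℕ) : ℝ :=
  if σ = τ then 0 else (2 : ℝ) ^ (1 - (firstDiff σ τ : ℤ))

/-- A subset of `ℕ^ℕ` is a `≺`-interval if it is order convex for `≺`. -/
def IsPrecInterval (prec : (ℕ → ℕ) → (ℕ → ℕ) → Prop) (I : Set (ℕ → ℕ)) : Prop :=
  ∀ a ∈ I, ∀ b ∈ I, ∀ c, prec a c → prec c b → c ∈ I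


-- nonempty open sets in Baire space are infinite
lemma open_infinite {U : Set (ℕ → ℕ)} (hU : IsOpen U) (hne : U.Nonempty) : U.Infinite := by
  obtain ⟨f, hf⟩ := hne
  rw [isOpen_pi_iff] at hU
  obtain ⟨s, u, hu, hsub⟩ := hU f hf
  obtain ⟨m, hm⟩ := Infinite.exists_notMem_finset s
  have hinj : Function.Injective (fun k : ℕ => Function.update f m k) := by
    intro a b hab
    have := congrFun hab m
    simpa [Function.update] using this
  have hrange : Set.range (fun k : ℕ => Function.update f m k) ⊆ U := by
    rintro _ ⟨k, rfl⟩
    apply hsub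
    intro i hi
    have : i ≠ m := fun h => hm (h ▸ hi)
    simp [Function.update, this, (hu i hi).2]
  exact Set.infinite_of_injective_forall_mem (f := fun k : ℕ => Function.update f m k)
    hinj (fun k => hrange ⟨k, rfl⟩)

lemma dense_inter_open_infinite {D U : Set (ℕ → ℕ)} (hD : Dense D) (hU : IsOpen U)
    (hne : U.Nonempty) : (D ∩ U).Infinite := by
  by_contra hfin
  rw [Set.not_infinite] at hfin
  have hUinf := open_infinite hU hne
  have hopen : IsOpen (U \ (D ∩ U)) := hU.sdiff hfin.isClosed
  have hne' : (U \ (D ∩ U)).Nonempty := by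
    have := hUinf.diff hfin
    exact this.nonempty
  obtain ⟨x, hx⟩ := hD.inter_open_nonempty _ hopen hne'
  exact hx.1.2 ⟨hx.2, hx.1.1⟩

theorem stmt17 (prec : (ℕ → ℕ) → (ℕ → ℕ) → Prop)
    (hwo : IsWellOrder (ℕ → ℕ) prec)
    (hdense : ∀ I : Set (ℕ → ℕ), IsPrecInterval prec I → I.Infinite → Dense I) :
    ∀ σ : ℕ → ℕ, ∀ I : Set (ℕ → ℕ), IsPrecInterval prec I → I.Infinite →
      ∃ τ : ℕ → (ℕ → ℕ),
        (∀ n, τ n ∈ I) ∧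
        (∀ n, prec (τ n) (τ (n + 1))) ∧
        ∀ n, 1 ≤ n → dN σ (τ n) ≤ (2:ℝ) ^ (-(n:ℤ) - 2) := by
  intro σ I hI hIinf
  have wf : WellFounded prec := hwo.toIsWellFounded.wf
  have tri : ∀ a b : ℕ → ℕ, prec a b ∨ a = b ∨ prec b a := fun a b =>
    trichotomous_of prec a b
  have trans : ∀ a b c : ℕ → ℕ, prec a b → prec b c → prec a c := fun a b c =>
    _root_.trans_of prec
  -- cylinders are open and nonempty
  have hcyl : ∀ m : ℕ, IsOpen {x : ℕ → ℕ | ∀ i < m, x i = σ i} := by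
    intro m
    have : {x : ℕ → ℕ | ∀ i < m, x i = σ i} = Set.pi (Finset.range m : Set ℕ)
        (fun i => {σ i}) := by
      ext x; simp [Set.pi]
    rw [this]
    exact isOpen_set_pi (Finset.range m).finite_toSet (fun i _ => isOpen_discrete _)
  -- key step
  have key : ∀ (m : ℕ) (a : ℕ → ℕ), a ∈ I → {x ∈ I | prec a x}.Infinite →
      ∃ b, b ∈ I ∧ prec a b ∧ (∀ i < m, b i = σ i) ∧ {x ∈ I | prec b x}.Infinite := by
    intro m a haI hT
    set T := {x ∈ I | prec a x} with hTdef
    have hTint : IsPrecInterval prec T := by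
      intro p hp q hq c hpc hcq
      exact ⟨hI p hp.1 q hq.1 c hpc hcq, trans a p c hp.2 hpc⟩
    have hTdense := hdense T hTint hT
    set U := {x : ℕ → ℕ | ∀ i < m, x i = σ i} with hUdef
    have hTU : (T ∩ U).Infinite :=
      dense_inter_open_infinite hTdense (hcyl m) ⟨σ, fun i _ => rfl⟩
    obtain ⟨b, hb, hmin⟩ := wf.has_min (T ∩ U) hTU.nonempty
    refine ⟨b, hb.1.1, hb.1.2, hb.2, ?_⟩
    have : (T ∩ U) \ {b} ⊆ {x ∈ I | prec b x} := by
      rintro x ⟨hx, hxb⟩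
      refine ⟨hx.1.1, ?_⟩
      rcases tri b x with h | h | h
      · exact h
      · exact absurd h.symm hxb
      · exact absurd h (hmin x hx)
    exact Set.Infinite.mono this ((hTU.diff (Set.finite_singleton b)))
  -- base element
  obtain ⟨b0, hb0, hmin0⟩ := wf.has_min I hIinf.nonempty
  have hb0tail : {x ∈ I | prec b0 x}.Infinite := by
    have : I \ {b0} ⊆ {x ∈ I | prec b0 x} := by
      rintro x ⟨hx, hxb⟩
      refine ⟨hx, ?_⟩
      rcases tri b0 x with h | h | h
      · exact h
      · exact absurd h.symm hxb
      · exact absurd h (hmin0 x hx)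
    exact Set.Infinite.mono this (hIinf.diff (Set.finite_singleton b0))
  classical
  choose! next hnI hnP hnC hnT using key
  set τ : ℕ → (ℕ → ℕ) := fun n => Nat.rec b0 (fun k a => next (k + 4) a) n with hτ
  have hτ0 : τ 0 = b0 := rfl
  have hτs : ∀ n, τ (n + 1) = next (n + 4) (τ n) := fun n => rfl
  have inv : ∀ n, τ n ∈ I ∧ {x ∈ I | prec (τ n) x}.Infinite := by
    intro n
    induction n with
    | zero => exact ⟨hb0, hb0tail⟩
    | succ k ih =>
      rw [hτs]
      exact ⟨hnI (k + 4) (τ k) ih.1 ih.2, hnT (k + 4) (τ k) ih.1 ih.2⟩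
  refine ⟨τ, fun n => (inv n).1, fun n => ?_, fun n hn => ?_⟩
  · rw [hτs]; exact hnP (n + 4) (τ n) (inv n).1 (inv n).2
  · -- distance bound
    obtain ⟨k, rfl⟩ := Nat.exists_eq_add_of_le hn
    have hclose : ∀ i < 1 + k + 3, τ (1 + k) i = σ i := by
      have h1 : 1 + k = k + 1 := by omega
      rw [h1, hτs]
      have := hnC (k + 4) (τ k) (inv k).1 (inv k).2
      intro i hi
      exact this i (by omega)
    have hpos : (0:ℝ) < (2:ℝ) ^ (-(((1:ℕ) + k : ℕ):ℤ) - 2) := by positivity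
    by_cases heq : σ = τ (1 + k)
    · rw [dN, if_pos heq]; exact hpos.le
    · rw [dN, if_neg heq]
      have hne : {n | σ n ≠ τ (1 + k) n}.Nonempty := Function.ne_iff.mp heq
      have hmem : σ (firstDiff σ (τ (1 + k))) ≠ τ (1 + k) (firstDiff σ (τ (1 + k))) :=
        Nat.sInf_mem hne
      have hge : 1 + k + 3 ≤ firstDiff σ (τ (1 + k)) := by
        by_contra h
        push_neg at h
        exact hmem ((hclose _ h).symm)
      have : (1 : ℤ) - (firstDiff σ (τ (1 + k)) : ℤ) ≤ -(((1:ℕ) + k : ℕ):ℤ) - 2 := by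
        push_cast
        omega
      exact zpow_le_zpow_right₀ one_le_two this
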